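/- For a function f which is C^2 in a neighborhood of 0 in the complex plane, the Laplacian of f at 0 equals the limit as r → 0 of (4/r^2) · ( (1/2π) ∫_{θ=0}^{2π} f(r e^{iθ}) dθ − f(0) ). -/

import Mathlib

open MeasureTheory Real Filter Complex
set_option maxHeartbeats 1000000

lemma clm_decomp (T : ℂ →L[ℝ] ℝ) (z : ℂ) : T z = z.re * T 1 + z.im * T Complex.I := by
  have h : z = z.re • (1:ℂ) + z.im • Complex.I := by
    simp [Complex.real_smul, Complex.re_add_im]
  conv_lhs => rw [h]
  rw [map_add, T.map_smul, T.map_smul]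
  simp [smul_eq_mul]

lemma circle_re (r θ : ℝ) : ((r : ℂ) * Complex.exp (θ * Complex.I)).re = r * Real.cos θ := by
  simp [Complex.exp_mul_I, Complex.mul_re, ← Complex.ofReal_cos, ← Complex.ofReal_sin]

lemma circle_im (r θ : ℝ) : ((r : ℂ) * Complex.exp (θ * Complex.I)).im = r * Real.sin θ := by
  simp [Complex.exp_mul_I, Complex.mul_im, ← Complex.ofReal_cos, ← Complex.ofReal_sin]

lemma circle_norm (r θ : ℝ) (hr : 0 ≤ r) : ‖(r : ℂ) * Complex.exp (θ * Complex.I)‖ = r := by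
  rw [norm_mul, Complex.norm_exp_ofReal_mul_I]
  simp [_root_.abs_of_nonneg hr]

/-- The Laplacian of `f : ℂ → ℝ` at `0`: second derivatives in the directions `1` and `I`. -/
noncomputable def laplacianAtZero (f : ℂ → ℝ) : ℝ :=
  iteratedFDeriv ℝ 2 f 0 ![(1 : ℂ), 1] + iteratedFDeriv ℝ 2 f 0 ![Complex.I, Complex.I]

lemma bilin_decomp (B : ℂ →L[ℝ] ℂ →L[ℝ] ℝ) (z : ℂ) :
    B z z = z.re^2 * B 1 1 + z.re*z.im*(B 1 Complex.I + B Complex.I 1)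
      + z.im^2 * B Complex.I Complex.I := by
  have h1 : B z z = z.re * B 1 z + z.im * B Complex.I z := by
    have h := clm_decomp (B.flip z) z
    simpa using h
  rw [h1, clm_decomp (B 1) z, clm_decomp (B Complex.I) z]
  ring

theorem stmt_0 (f : ℂ → ℝ) (U : Set ℂ) (hU : IsOpen U) (h0 : (0 : ℂ) ∈ U)
    (hf : ContDiffOn ℝ 2 f U) :
    Tendsto
      (fun r : ℝ => 4 / r ^ 2 *
        ((1 / (2 * π)) * (∫ θ in (0:ℝ)..(2 * π), f ((r : ℂ) * Complex.exp (θ * Complex.I)))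
          - f 0))
      (nhdsWithin 0 (Set.Ioi 0)) (nhds (laplacianAtZero f)) := by
  set f' : ℂ → (ℂ →L[ℝ] ℝ) := fderiv ℝ f with hf'def
  set B : ℂ →L[ℝ] ℂ →L[ℝ] ℝ := fderiv ℝ f' 0 with hBdef
  set L : ℂ →L[ℝ] ℝ := f' 0 with hLdef
  obtain ⟨δ, δpos, hδ⟩ : ∃ δ > 0, Metric.ball 0 δ ⊆ U := Metric.isOpen_iff.1 hU 0 h0
  have hCA : ContDiffAt ℝ 2 f 0 := hf.contDiffAt (hU.mem_nhds h0)
  have hdf : ∀ z ∈ Metric.ball (0:ℂ) δ, HasFDerivAt f (f' z) z := fun z hz =>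
    ((hf.contDiffAt (hU.mem_nhds (hδ hz))).differentiableAt (by norm_num)).hasFDerivAt
  have hB : HasFDerivAt f' B 0 := by
    have h1 : ContDiffAt ℝ 1 f' 0 := hCA.fderiv_right (by norm_num)
    exact (h1.differentiableAt (by norm_num)).hasFDerivAt
  have hsymm : ∀ v w, B v w = B w v := by
    intro v w
    refine second_derivative_symmetric_of_eventually (f := f) ?_ hB v w
    filter_upwards [Metric.ball_mem_nhds (0:ℂ) δpos] with y hy using hdf y hy
  have hlap : laplacianAtZero f = B 1 1 + B Complex.I Complex.I := by
    rw [laplacianAtZero, iteratedFDeriv_two_apply, iteratedFDeriv_two_apply]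
    simp [hBdef, hf'def]
  -- derivative of the quadratic part
  have hq : ∀ z : ℂ, HasFDerivAt (fun w : ℂ => B w w / 2) (B z) z := by
    intro z
    have hc : HasFDerivAt (fun w : ℂ => B w) B z := B.hasFDerivAt
    have hu : HasFDerivAt (fun w : ℂ => w) (ContinuousLinearMap.id ℝ ℂ) z := hasFDerivAt_id z
    have h2 := hc.clm_apply hu
    have h3 : HasFDerivAt (fun w : ℂ => (2:ℝ)⁻¹ • (B w w))
        ((2:ℝ)⁻¹ • ((B z).comp (ContinuousLinearMap.id ℝ ℂ) + B.flip z)) z :=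
      h2.const_smul (2:ℝ)⁻¹
    have heq : ((2:ℝ)⁻¹ • ((B z).comp (ContinuousLinearMap.id ℝ ℂ) + B.flip z)) = B z := by
      ext w
      simp only [ContinuousLinearMap.smul_apply, ContinuousLinearMap.add_apply,
        ContinuousLinearMap.comp_apply, ContinuousLinearMap.coe_id', id_eq,
        ContinuousLinearMap.flip_apply, smul_eq_mul]
      rw [hsymm w z]
      ring
    rw [heq] at h3
    convert h3 using 2 with w
    simp [smul_eq_mul]
    ring
  set g : ℂ → ℝ := fun z => f z - f 0 - L z - B z z / 2 with hgdef
  have hg0 : g 0 = 0 := by simp [hgdef]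
  have hg' : ∀ z ∈ Metric.ball (0:ℂ) δ, HasFDerivAt g (f' z - L - B z) z := fun z hz =>
    (((hdf z hz).sub_const (f 0)).sub L.hasFDerivAt).sub (hq z)
  -- key uniform estimate
  have key : ∀ ε : ℝ, 0 < ε → ∀ᶠ r : ℝ in nhdsWithin (0:ℝ) (Set.Ioi (0:ℝ)),
      ∀ θ : ℝ, |g ((r:ℂ) * Complex.exp (θ * Complex.I))| ≤ ε * r^2 := by
    intro ε εpos
    have ho := hasFDerivAt_iff_isLittleO_nhds_zero.1 hB
    have h2 := (Asymptotics.isLittleO_iff.1 ho εpos)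
    obtain ⟨δ₁, δ₁pos, hδ₁⟩ := Metric.eventually_nhds_iff_ball.1 h2
    set δ₂ := min δ δ₁ with hδ₂def
    have δ₂pos : 0 < δ₂ := lt_min δpos δ₁pos
    filter_upwards [Ioo_mem_nhdsGT_of_mem ⟨le_refl (0:ℝ), δ₂pos⟩] with r hr θ
    obtain ⟨hr0, hrδ₂⟩ := hr
    set z : ℂ := (r:ℂ) * Complex.exp (θ * Complex.I) with hzdef
    have hznorm : ‖z‖ = r := circle_norm r θ hr0.le
    have hball : Metric.closedBall (0:ℂ) r ⊆ Metric.ball (0:ℂ) δ := by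
      intro w hw
      simp only [Metric.mem_closedBall, Metric.mem_ball, dist_zero_right] at hw ⊢
      exact lt_of_le_of_lt hw (lt_of_lt_of_le hrδ₂ (min_le_left _ _))
    have hbound : ∀ w ∈ Metric.closedBall (0:ℂ) r, ‖f' w - L - B w‖ ≤ ε * r := by
      intro w hw
      simp only [Metric.mem_closedBall, dist_zero_right] at hw
      have hwball : w ∈ Metric.ball (0:ℂ) δ₁ := by
        simp only [Metric.mem_ball, dist_zero_right]
        exact lt_of_le_of_lt hw (lt_of_lt_of_le hrδ₂ (min_le_right _ _))
      have := hδ₁ w hwball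
      simp only [zero_add] at this
      calc ‖f' w - L - B w‖ = ‖f' w - f' 0 - B w‖ := by rw [hLdef]
        _ ≤ ε * ‖w‖ := this
        _ ≤ ε * r := by nlinarith [norm_nonneg w]
    have hmv := (convex_closedBall (0:ℂ) r).norm_image_sub_le_of_norm_hasFDerivWithin_le
      (fun w hw => (hg' w (hball hw)).hasFDerivWithinAt) hbound
      (Metric.mem_closedBall_self hr0.le)
      (show z ∈ Metric.closedBall (0:ℂ) r by
        simp [Metric.mem_closedBall, dist_zero_right, hznorm])
    rw [hg0, sub_zero, sub_zero, hznorm] at hmv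
    calc |g z| = ‖g z‖ := (Real.norm_eq_abs _).symm
      _ ≤ ε * r * r := hmv
      _ = ε * r ^ 2 := by ring
  -- continuity of the circle maps
  have hc : ∀ r : ℝ, Continuous fun θ : ℝ => (r:ℂ) * Complex.exp (θ * Complex.I) :=
    fun r => continuous_const.mul (Complex.continuous_exp.comp
      (Complex.continuous_ofReal.mul continuous_const))
  have hmem : ∀ r : ℝ, 0 ≤ r → r < δ → ∀ θ : ℝ,
      (r:ℂ) * Complex.exp (θ * Complex.I) ∈ Metric.ball (0:ℂ) δ := by
    intro r hr0 hrδ θ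
    simp only [Metric.mem_ball, dist_zero_right]
    rw [circle_norm r θ hr0]
    exact hrδ
  have hgc : ∀ r : ℝ, 0 ≤ r → r < δ →
      Continuous fun θ : ℝ => g ((r:ℂ) * Complex.exp (θ * Complex.I)) := by
    intro r hr0 hrδ
    have hfc : Continuous fun θ : ℝ => f ((r:ℂ) * Complex.exp (θ * Complex.I)) :=
      hf.continuousOn.comp_continuous (hc r) (fun θ => hδ (hmem r hr0 hrδ θ))
    have hLc : Continuous fun θ : ℝ => L ((r:ℂ) * Complex.exp (θ * Complex.I)) :=
      L.continuous.comp (hc r)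
    have hBc : Continuous fun θ : ℝ => B ((r:ℂ) * Complex.exp (θ * Complex.I))
        ((r:ℂ) * Complex.exp (θ * Complex.I)) / 2 :=
      (B.isBoundedBilinearMap.continuous.comp ((hc r).prodMk (hc r))).div_const 2
    exact ((hfc.sub continuous_const).sub hLc).sub hBc
  -- the integral identity
  have hint : ∀ r : ℝ, 0 < r → r < δ →
      (∫ θ in (0:ℝ)..(2*π), f ((r:ℂ) * Complex.exp (θ * Complex.I))) =
        2*π*(f 0) + π/2 * r^2 * (B 1 1 + B Complex.I Complex.I)
          + ∫ θ in (0:ℝ)..(2*π), g ((r:ℂ) * Complex.exp (θ * Complex.I)) := by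
    intro r hr0 hrδ
    have hpt : ∀ θ : ℝ, f ((r:ℂ) * Complex.exp (θ * Complex.I)) =
        f 0 + ((r * L 1) * Real.cos θ + (r * L Complex.I) * Real.sin θ)
        + ((r^2 * B 1 1 / 2) * Real.cos θ ^ 2
            + (r^2 * (B 1 Complex.I + B Complex.I 1) / 2) * (Real.sin θ * Real.cos θ)
            + (r^2 * B Complex.I Complex.I / 2) * Real.sin θ ^ 2)
        + g ((r:ℂ) * Complex.exp (θ * Complex.I)) := by
      intro θ
      have hz := clm_decomp L ((r:ℂ) * Complex.exp (θ * Complex.I))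
      have hb := bilin_decomp B ((r:ℂ) * Complex.exp (θ * Complex.I))
      rw [circle_re, circle_im] at hz hb
      simp only [hgdef]
      rw [hz, hb]
      ring
    rw [intervalIntegral.integral_congr (g := fun θ =>
        f 0 + ((r * L 1) * Real.cos θ + (r * L Complex.I) * Real.sin θ)
        + ((r^2 * B 1 1 / 2) * Real.cos θ ^ 2
            + (r^2 * (B 1 Complex.I + B Complex.I 1) / 2) * (Real.sin θ * Real.cos θ)
            + (r^2 * B Complex.I Complex.I / 2) * Real.sin θ ^ 2)
        + g ((r:ℂ) * Complex.exp (θ * Complex.I))) (fun θ _ => hpt θ)]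
    have i1 : IntervalIntegrable (fun _ : ℝ => f 0) volume 0 (2*π) :=
      intervalIntegrable_const
    have i2 : IntervalIntegrable (fun θ : ℝ =>
        (r * L 1) * Real.cos θ + (r * L Complex.I) * Real.sin θ) volume 0 (2*π) :=
      (Continuous.intervalIntegrable (by fun_prop) _ _)
    have i3 : IntervalIntegrable (fun θ : ℝ =>
        (r^2 * B 1 1 / 2) * Real.cos θ ^ 2
          + (r^2 * (B 1 Complex.I + B Complex.I 1) / 2) * (Real.sin θ * Real.cos θ)
          + (r^2 * B Complex.I Complex.I / 2) * Real.sin θ ^ 2) volume 0 (2*π) :=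
      (Continuous.intervalIntegrable (by fun_prop) _ _)
    have i4 : IntervalIntegrable (fun θ : ℝ =>
        g ((r:ℂ) * Complex.exp (θ * Complex.I))) volume 0 (2*π) :=
      ((hgc r hr0.le hrδ).intervalIntegrable _ _)
    rw [intervalIntegral.integral_add ((i1.add i2).add i3) i4,
      intervalIntegral.integral_add (i1.add i2) i3,
      intervalIntegral.integral_add i1 i2]
    have e0 : (∫ _ in (0:ℝ)..(2*π), f 0) = 2*π*(f 0) := by
      rw [intervalIntegral.integral_const]
      rw [smul_eq_mul]
      ring
    have e1 : (∫ θ in (0:ℝ)..(2*π),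
        ((r * L 1) * Real.cos θ + (r * L Complex.I) * Real.sin θ)) = 0 := by
      rw [intervalIntegral.integral_add
          (Continuous.intervalIntegrable (by fun_prop) _ _)
          (Continuous.intervalIntegrable (by fun_prop) _ _),
        intervalIntegral.integral_const_mul, intervalIntegral.integral_const_mul,
        integral_cos, integral_sin]
      simp [Real.sin_two_pi, Real.cos_two_pi]
    have e2 : (∫ θ in (0:ℝ)..(2*π),
        ((r^2 * B 1 1 / 2) * Real.cos θ ^ 2
          + (r^2 * (B 1 Complex.I + B Complex.I 1) / 2) * (Real.sin θ * Real.cos θ)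
          + (r^2 * B Complex.I Complex.I / 2) * Real.sin θ ^ 2))
        = π/2 * r^2 * (B 1 1 + B Complex.I Complex.I) := by
      rw [intervalIntegral.integral_add
          (IntervalIntegrable.add
            (Continuous.intervalIntegrable (by fun_prop) _ _)
            (Continuous.intervalIntegrable (by fun_prop) _ _))
          (Continuous.intervalIntegrable (by fun_prop) _ _),
        intervalIntegral.integral_add
          (Continuous.intervalIntegrable (by fun_prop) _ _)
          (Continuous.intervalIntegrable (by fun_prop) _ _),
        intervalIntegral.integral_const_mul, intervalIntegral.integral_const_mul,
        intervalIntegral.integral_const_mul,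
        integral_cos_sq, integral_sin_mul_cos₁, integral_sin_sq]
      simp [Real.sin_two_pi, Real.cos_two_pi]
      ring
    rw [e0, e1, e2]
    ring
  -- conclusion
  rw [hlap]
  rw [Metric.tendsto_nhds]
  intro ε εpos
  filter_upwards [key (ε/8) (by positivity),
    Ioo_mem_nhdsGT_of_mem ⟨le_refl (0:ℝ), δpos⟩] with r hgr hr
  obtain ⟨hr0, hrδ⟩ := hr
  have hπ : (0:ℝ) < π := Real.pi_pos
  have hIg : |∫ θ in (0:ℝ)..(2*π), g ((r:ℂ) * Complex.exp (θ * Complex.I))|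
      ≤ ε/8 * r^2 * (2*π) := by
    have h := intervalIntegral.norm_integral_le_of_norm_le_const
      (a := (0:ℝ)) (b := 2*π) (C := ε/8 * r^2)
      (f := fun θ => g ((r:ℂ) * Complex.exp (θ * Complex.I)))
      (fun x _ => by simpa [Real.norm_eq_abs] using hgr x)
    rw [Real.norm_eq_abs] at h
    have : |2*π - 0| = 2*π := by
      rw [sub_zero]; exact abs_of_pos (by positivity)
    rw [this] at h
    linarith
  rw [Real.dist_eq, hint r hr0 hrδ]
  set T := B 1 1 + B Complex.I Complex.I with hT
  set Ig := ∫ θ in (0:ℝ)..(2*π), g ((r:ℂ) * Complex.exp (θ * Complex.I)) with hIgdef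
  have hrne : r ≠ 0 := hr0.ne'
  have hπne : π ≠ 0 := hπ.ne'
  have h1 : 4/r^2 * ((1/(2*π)) * (2*π*(f 0) + π/2 * r^2 * T + Ig) - f 0) - T
      = 2*Ig/(π*r^2) := by
    field_simp
    ring
  rw [h1, abs_div, abs_of_pos (show (0:ℝ) < π*r^2 by positivity),
    show |(2:ℝ)*Ig| = 2*|Ig| from by rw [abs_mul]; norm_num]
  calc 2*|Ig|/(π*r^2) ≤ (2*(ε/8 * r^2 * (2*π)))/(π*r^2) := by gcongr
    _ = ε/2 := by field_simp; ring
    _ < ε := by linarith
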